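/- (Dense tight component.) Let ℓ ≥ 2 and let L be an ℓ-graph with at least one edge. Then L has a tight component C satisfying e_ℓ(C)·e_{ℓ−1}(L) ≥ e_ℓ(L)·e_{ℓ−1}(C); in particular, if δ, ν and ν' denote the edge densities of L, C and ∂(C) respectively (all on the vertex set of L), then ν ≥ δ·ν'. -/

import Mathlib

open Finset

variable {A : Type*} [DecidableEq A]

/-- The set of vertices occupying positions `i, …, i+k-1` of the walk `w`. -/
def walkEdgeAt (k : ℕ) (w : List A) (i : ℕ) : Finset A :=
  ((w.drop i).take k).toFinset

/-- `w` is a tight walk in the `k`-graph with edge set `E`: it has at least `k`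
vertices and every `k` consecutive vertices form an edge of `E`. -/
def IsTightWalk (k : ℕ) (E : Finset (Finset A)) (w : List A) : Prop :=
  k ≤ w.length ∧ ∀ i, i + k ≤ w.length → walkEdgeAt k w i ∈ E

/-- The edge `e` appears on the walk `w` (as `k` consecutive vertices). -/
def EdgeOnWalk (k : ℕ) (w : List A) (e : Finset A) : Prop :=
  ∃ i, i + k ≤ w.length ∧ walkEdgeAt k w i = e

/-- A `k`-uniform edge set is tightly connected if any two of its edges lie on a
common tight walk all of whose edges belong to it. -/
def TightlyConnected (k : ℕ) (E : Finset (Finset A)) : Prop :=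
  ∀ e₁ ∈ E, ∀ e₂ ∈ E, ∃ w : List A, IsTightWalk k E w ∧ EdgeOnWalk k w e₁ ∧ EdgeOnWalk k w e₂

/-- `w` is a closed tight walk: every cyclic interval of `k` consecutive vertices
forms an edge of `E`.  Its length is `w.length`. -/
def IsClosedTightWalk (k : ℕ) (E : Finset (Finset A)) (w : List A) : Prop :=
  k ≤ w.length ∧ ∀ i < w.length, ((w.rotate i).take k).toFinset ∈ E

/-- A tight Hamilton cycle: a cyclic ordering of all the vertices in which every `k`
cyclically consecutive vertices form an edge. -/
def HasTightHamCycle (k : ℕ) (V : Finset A) (E : Finset (Finset A)) : Prop :=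
  ∃ w : List A, w.Nodup ∧ w.toFinset = V ∧ IsClosedTightWalk k E w

/-- The `j`-th shadow: all `j`-element sets contained in some edge. -/
def shadow (j : ℕ) (E : Finset (Finset A)) : Finset (Finset A) :=
  E.biUnion fun e => e.powersetCard j

/-- The link graph of `S`: the `(k-d)`-graph whose edges are `e \ S` for edges `e ⊇ S`. -/
def link (S : Finset A) (E : Finset (Finset A)) : Finset (Finset A) :=
  (E.filter fun e => S ⊆ e).image fun e => e \ S

/-- `E` has a fractional matching of size at least `m`. -/
def HasFracMatching (E : Finset (Finset A)) (m : ℝ) : Prop :=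
  ∃ w : Finset A → ℝ,
    (∀ e ∈ E, 0 ≤ w e ∧ w e ≤ 1) ∧
    (∀ v : A, ∑ e ∈ E.filter (fun e' => v ∈ e'), w e ≤ 1) ∧
    m ≤ ∑ e ∈ E, w e

/-- `E` has a `b`-fractional matching of size at least `m` (vertex constraints on `V`). -/
def HasBFracMatching (V : Finset A) (E : Finset (Finset A)) (b : A → ℝ) (m : ℝ) : Prop :=
  ∃ w : Finset A → ℝ,
    (∀ e ∈ E, 0 ≤ w e ∧ w e ≤ 1) ∧
    (∀ v ∈ V, ∑ e ∈ E.filter (fun e' => v ∈ e'), w e ≤ b v) ∧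
    m ≤ ∑ e ∈ E, w e

/-- `γ`-robustly matchable: every vertex weighting with values in `[1-γ,1]` is realised
exactly by an edge weighting with values in `[0,1]`. -/
def RobustlyMatchable (γ : ℝ) (V : Finset A) (E : Finset (Finset A)) : Prop :=
  ∀ b : A → ℝ, (∀ v ∈ V, 1 - γ ≤ b v ∧ b v ≤ 1) →
    ∃ w : Finset A → ℝ, (∀ e ∈ E, 0 ≤ w e ∧ w e ≤ 1) ∧
      ∀ v ∈ V, ∑ e ∈ E.filter (fun e' => v ∈ e'), w e = b v

/-- A switcher: an edge `e` with a central vertex `a` such that for every `b ∈ e`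
there is `c ∉ e` with `(e ∪ {c}) \ {a}` and `(e ∪ {c}) \ {b}` both edges. -/
def HasSwitcher (C : Finset (Finset A)) : Prop :=
  ∃ e ∈ C, ∃ a ∈ e, ∀ b ∈ e, ∃ c, c ∉ e ∧
    insert c (e.erase a) ∈ C ∧ insert c (e.erase b) ∈ C

/-- An arc for the `d`-vicinity `C` of the `k`-graph with edge set `E`: a tuple of
`k+1` distinct vertices `v₁, …, v_{k+1}` with `{v₁,…,v_d} ∈ ∂_d`,
`{v_{d+1},…,v_k} ∈ C {v₁,…,v_d}`, `{v₂,…,v_{d+1}} ∈ ∂_d` and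
`{v_{d+2},…,v_{k+1}} ∈ C {v₂,…,v_{d+1}}`. -/
def HasArc (k d : ℕ) (E : Finset (Finset A)) (C : Finset A → Finset (Finset A)) : Prop :=
  ∃ l : List A, l.length = k + 1 ∧ l.Nodup ∧
    (l.take d).toFinset ∈ shadow d E ∧
    ((l.drop d).take (k - d)).toFinset ∈ C ((l.take d).toFinset) ∧
    ((l.drop 1).take d).toFinset ∈ shadow d E ∧
    (l.drop (d + 1)).toFinset ∈ C (((l.drop 1).take d).toFinset)

/-- The `k`-graph generated by a `d`-vicinity: all sets `B ∪ S` with `S ∈ ∂_d(E)`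
and `B ∈ C S`. -/
def generatedEdges (d : ℕ) (E : Finset (Finset A)) (C : Finset A → Finset (Finset A)) :
    Finset (Finset A) :=
  (shadow d E).biUnion fun S => (C S).image fun B => B ∪ S

/-- `α`-perturbed minimum relative `d`-degree at least `δ` for a `k`-graph on vertex
set `V` with edge set `E`. -/
def PerturbedDegLB (k d : ℕ) (a δ : ℝ) (V : Finset A) (E : Finset (Finset A)) : Prop :=
  ∀ j : ℕ, 1 ≤ j → j ≤ d →
    (∀ S ∈ shadow j E,
      δ * (((V.card - j).choose (k - j) : ℕ) : ℝ) ≤ ((E.filter fun e => S ⊆ e).card : ℝ)) ∧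
    ((((V.powersetCard j).filter fun S => S ∉ shadow j E).card : ℝ)
        ≤ a * ((V.card.choose j : ℕ) : ℝ)) ∧
    (∀ T : Finset A, (T ∈ shadow (j - 1) E ∨ (j = 1 ∧ T = ∅)) →
      ((((V.powersetCard j).filter fun S => T ⊆ S ∧ S ∉ shadow j E).card : ℝ)
        < a * ((V.card : ℝ) - (j : ℝ) + 1)))

/-- A `(γ, δ)`-Hamilton `d`-vicinity of a `k`-graph on `t = V.card` vertices. -/
def IsHamVicinity (k d : ℕ) (γ δ : ℝ) (V : Finset A) (E : Finset (Finset A))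
    (C : Finset A → Finset (Finset A)) : Prop :=
  (∀ S ∈ shadow d E, C S ⊆ link S E) ∧
  (∀ S ∈ shadow d E, TightlyConnected (k - d) (C S)) ∧
  (∀ S ∈ shadow d E, ∀ S' ∈ shadow d E, (C S ∩ C S').Nonempty) ∧
  (∀ S ∈ shadow d E, HasSwitcher (C S)) ∧
  HasArc k d E C ∧
  (∀ S ∈ shadow d E, HasFracMatching (C S) ((1 / (k : ℝ) + γ) * (V.card : ℝ))) ∧
  (∀ S ∈ shadow d E, (1 - δ + γ) * ((V.card.choose (k - d) : ℕ) : ℝ) ≤ ((C S).card : ℝ))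

/-- An `(a, γ, δ)`-Hamilton framework: a subgraph on vertex set `VH` with edge set `EH`
of a `k`-graph on vertex set `VR`, satisfying (F1)–(F5). -/
def IsHamFramework (k : ℕ) (a γ δ : ℝ) (VR VH : Finset A) (EH : Finset (Finset A)) : Prop :=
  (1 - a) * (VR.card : ℝ) ≤ (VH.card : ℝ) ∧
  TightlyConnected k EH ∧
  (∃ w : List A, IsClosedTightWalk k EH w ∧ w.length % k = 1 % k) ∧
  RobustlyMatchable γ VH EH ∧
  (∀ v ∈ VH, (1 - δ + γ) * (((VH.card - 1).choose (k - 1) : ℕ) : ℝ)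
      ≤ ((EH.filter fun e => v ∈ e).card : ℝ))

/-- A tight component: an edge-maximal tightly connected subgraph. -/
def IsTightComponent (k : ℕ) (E C : Finset (Finset A)) : Prop :=
  C ⊆ E ∧ TightlyConnected k C ∧
    ∀ C' : Finset (Finset A), C ⊆ C' → C' ⊆ E → TightlyConnected k C' → C' = C

/-- `δ` has the `(k,d)`-Hamilton-cycle property. -/
def HamCycleProp (k d : ℕ) (δ : ℝ) : Prop :=
  ∀ μ : ℝ, 0 < μ → ∃ n₀ : ℕ, ∀ (B : Type) [DecidableEq B],
    ∀ (V : Finset B) (E : Finset (Finset B)),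
      n₀ ≤ V.card → (∀ e ∈ E, e ⊆ V ∧ e.card = k) →
      (∀ S ⊆ V, S.card = d →
        (δ + μ) * (((V.card - d).choose (k - d) : ℕ) : ℝ)
          ≤ ((E.filter fun e => S ⊆ e).card : ℝ)) →
      HasTightHamCycle k V E

/-- `δ` has the `(k,d)`-Hamilton-framework property. -/
def HamFrameworkProp (k d : ℕ) (δ : ℝ) : Prop :=
  ∀ μ : ℝ, 0 < μ → ∃ γ₀ : ℝ, 0 < γ₀ ∧ ∀ γ : ℝ, 0 < γ → γ ≤ γ₀ →
    ∃ α₀ : ℝ, 0 < α₀ ∧ ∀ a : ℝ, 0 < a → a ≤ α₀ →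
      ∃ ε₀ : ℝ, 0 < ε₀ ∧ ∀ ε : ℝ, 0 < ε → ε ≤ ε₀ →
        ∃ t₀ : ℕ, ∀ t : ℕ, t₀ ≤ t →
          ∀ (B : Type) [DecidableEq B], ∀ (VR : Finset B) (ER : Finset (Finset B)),
            VR.card = t → (∀ e ∈ ER, e ⊆ VR ∧ e.card = k) →
            (∀ S ⊆ VR, S.card = d →
              (δ + μ) * (((t - d).choose (k - d) : ℕ) : ℝ)
                ≤ ((ER.filter fun e => S ⊆ e).card : ℝ)) →
            ∀ I : Finset (Finset B), I ⊆ ER → (I.card : ℝ) ≤ ε * ((t.choose k : ℕ) : ℝ) →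
              ∃ (VH : Finset B) (EH : Finset (Finset B)),
                VH ⊆ VR ∧ EH ⊆ ER ∧ (∀ e ∈ EH, e ⊆ VH) ∧ (∀ e ∈ EH, e ∉ I) ∧
                IsHamFramework k a γ δ VR VH EH

/-- `δ` has the `(k,d)`-Hamilton-vicinity property. -/
def HamVicinityProp (k d : ℕ) (δ : ℝ) : Prop :=
  ∀ μ : ℝ, 0 < μ → ∃ γ₀ : ℝ, 0 < γ₀ ∧ ∀ γ : ℝ, 0 < γ → γ ≤ γ₀ →
    ∃ α₀ : ℝ, 0 < α₀ ∧ ∀ a : ℝ, 0 < a → a ≤ α₀ →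
      ∃ t₀ : ℕ, ∀ t : ℕ, t₀ ≤ t →
        ∀ (B : Type) [DecidableEq B], ∀ (V : Finset B) (E : Finset (Finset B)),
          V.card = t → (∀ e ∈ E, e ⊆ V ∧ e.card = k) →
          PerturbedDegLB k d a (δ + μ) V E →
          (∀ v ∈ V, ∃ e ∈ E, v ∈ e) →
          ∃ C : Finset B → Finset (Finset B), IsHamVicinity k d γ δ V E C

/-! ### Auxiliary development for Statement 12 -/

section DTC

attribute [local instance 10] Classical.propDecidable

open Relation

/-- Two edges are adjacent if both lie in `E` and share at least `k-1` vertices. -/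
def dtcRel (k : ℕ) (E : Finset (Finset A)) (e f : Finset A) : Prop :=
  e ∈ E ∧ f ∈ E ∧ k - 1 ≤ (e ∩ f).card

lemma dtcRel_symm (k : ℕ) (E : Finset (Finset A)) : Symmetric (dtcRel k E) := by
  rintro e f ⟨he, hf, h⟩
  exact ⟨hf, he, by rwa [Finset.inter_comm]⟩

/-- The reachability class of `e` under `dtcRel`. -/
noncomputable def dtcComp (k : ℕ) (E : Finset (Finset A)) (e : Finset A) : Finset (Finset A) :=
  E.filter fun f => Relation.ReflTransGen (dtcRel k E) e f

lemma mem_dtcComp {k : ℕ} {E : Finset (Finset A)} {e f : Finset A} :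
    f ∈ dtcComp k E e ↔ f ∈ E ∧ Relation.ReflTransGen (dtcRel k E) e f := by
  unfold dtcComp
  exact Finset.mem_filter

lemma dtcComp_subset (k : ℕ) (E : Finset (Finset A)) (e : Finset A) :
    dtcComp k E e ⊆ E := Finset.filter_subset _ _

lemma dtcComp_congr {k : ℕ} {E : Finset (Finset A)} {e f : Finset A}
    (h : f ∈ dtcComp k E e) : dtcComp k E f = dtcComp k E e := by
  have hef := (mem_dtcComp.mp h).2
  have hfe := (by haveI hsymm : Std.Symm (dtcRel k E) := ⟨fun _ _ h => dtcRel_symm k E h⟩; exact Relation.ReflTransGen.symmetric.symm _ _ hef)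
  ext g
  rw [mem_dtcComp, mem_dtcComp]
  constructor
  · rintro ⟨hg, hfg⟩; exact ⟨hg, hef.trans hfg⟩
  · rintro ⟨hg, heg⟩; exact ⟨hg, hfe.trans heg⟩

lemma nodup_of_toFinset_card {l : List A} (h : l.toFinset.card = l.length) : l.Nodup := by
  rw [List.card_toFinset] at h
  exact l.dedup_sublist.eq_of_length h ▸ l.nodup_dedup

lemma walkEdgeAt_append (k : ℕ) (w m : List A) (i : ℕ) (h : i + k ≤ w.length) :
    walkEdgeAt k (w ++ m) i = walkEdgeAt k w i := by
  unfold walkEdgeAt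
  rw [List.drop_append_of_le_length (by omega),
    List.take_append_of_le_length (by simp [List.length_drop]; omega)]

/-- The key walk-building step: starting from an ordering `τ` of the edge `f`, one can
append vertices so that every window is `f` or `g`, ending with a window equal to `g`. -/
lemma dtc_step (k : ℕ) (hk : 1 ≤ k) (f g : Finset A) (hfc : f.card = k) (hgc : g.card = k)
    (hfg : k - 1 ≤ (f ∩ g).card) (τ : List A) (hnd : τ.Nodup) (hlen : τ.length = k)
    (hτ : τ.toFinset = f) :
    ∃ m : List A,
      (∀ i, i + k ≤ (τ ++ m).length → walkEdgeAt k (τ ++ m) i = f ∨ walkEdgeAt k (τ ++ m) i = g)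
      ∧ walkEdgeAt k (τ ++ m) ((τ ++ m).length - k) = g := by
  have hwin0 : walkEdgeAt k τ 0 = f := by
    unfold walkEdgeAt
    rw [List.drop_zero, List.take_of_length_le hlen.le, hτ]
  by_cases hfgeq : f = g
  · refine ⟨[], ?_, ?_⟩
    · intro i hi
      simp only [List.append_nil] at hi ⊢
      have : i = 0 := by omega
      subst this
      exact Or.inl hwin0
    · simp only [List.append_nil, hlen]
      have : k - k = 0 := by omega
      rw [this, hwin0, hfgeq]
  · -- the two edges differ in exactly one vertex
    have hle : (f ∩ g).card ≤ k - 1 := by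
      by_contra hcon
      push_neg at hcon
      have hk' : f.card ≤ (f ∩ g).card := by omega
      have h1 : f ∩ g = f := Finset.eq_of_subset_of_card_le Finset.inter_subset_left hk'
      have h2 : f ⊆ g := Finset.inter_eq_left.mp h1
      exact hfgeq (Finset.eq_of_subset_of_card_le h2 (by omega))
    have hic : (f ∩ g).card = k - 1 := le_antisymm hle hfg
    have hfg1 : (f \ g).card = 1 := by
      have := Finset.card_inter_add_card_sdiff f g
      omega
    have hgf1 : (g \ f).card = 1 := by
      have := Finset.card_inter_add_card_sdiff g f
      rw [Finset.inter_comm] at hic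
      omega
    obtain ⟨b, hb⟩ := Finset.card_eq_one.mp hfg1
    obtain ⟨c, hc⟩ := Finset.card_eq_one.mp hgf1
    have hbf : b ∈ f := by
      have : b ∈ f \ g := hb ▸ Finset.mem_singleton_self b
      exact (Finset.mem_sdiff.mp this).1
    have hcg : c ∈ g := by
      have : c ∈ g \ f := hc ▸ Finset.mem_singleton_self c
      exact (Finset.mem_sdiff.mp this).1
    have hgeq : g = insert c (f ∩ g) := by
      have h1 := Finset.sdiff_union_inter g f
      rw [hc] at h1
      rw [Finset.insert_eq, Finset.inter_comm]
      exact h1.symm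
    have hfib : f ∩ g = f.erase b := by
      rw [← Finset.sdiff_sdiff_self_left f g, hb, Finset.sdiff_singleton_eq_erase]
    set p := τ.idxOf b with hp
    have hbτ : b ∈ τ := by rw [← List.mem_toFinset, hτ]; exact hbf
    have hplt : p < k := by rw [← hlen]; exact List.idxOf_lt_length_iff.mpr hbτ
    have hgetb : τ.drop p = b :: τ.drop (p + 1) := by
      rw [List.drop_eq_getElem_cons (by omega), List.getElem_idxOf (by omega)]
    have hτsplit : τ.take p ++ b :: τ.drop (p + 1) = τ := by
      rw [← hgetb, List.take_append_drop]
    have hwlen : (τ ++ (τ.take p ++ [c])).length = k + p + 1 := by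
      simp [List.length_append, List.length_take, hlen]
      omega
    have hfwin : ∀ i ≤ p, walkEdgeAt k (τ ++ (τ.take p ++ [c])) i = f := by
      intro i hip
      unfold walkEdgeAt
      rw [List.drop_append_of_le_length (by omega)]
      have hdlen : (τ.drop i).length = k - i := by simp [hlen]
      have hkeq : k = (τ.drop i).length + i := by omega
      rw [hkeq, List.take_length_add_append]
      have htakei : (τ.take p ++ [c]).take i = τ.take i := by
        rw [List.take_append_of_le_length (by simp [List.length_take]; omega),
          List.take_take]
        congr 1
        omega
      rw [htakei, List.toFinset_append, Finset.union_comm, ← List.toFinset_append,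
        List.take_append_drop, hτ]
    have hgwin : walkEdgeAt k (τ ++ (τ.take p ++ [c])) (p + 1) = g := by
      unfold walkEdgeAt
      rw [List.drop_append_of_le_length (by omega)]
      have hdlen : (τ.drop (p + 1) ++ (τ.take p ++ [c])).length = k := by
        simp [List.length_append, List.length_take, hlen]
        omega
      rw [List.take_of_length_le hdlen.le]
      -- compute the vertex set
      have hbnot : b ∉ τ.take p ∧ b ∉ τ.drop (p + 1) := by
        have hnd' : (τ.take p ++ b :: τ.drop (p + 1)).Nodup := by rw [hτsplit]; exact hnd
        rw [List.nodup_append] at hnd'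
        exact ⟨fun hmem => hnd'.2.2 b hmem b List.mem_cons_self rfl,
          (List.nodup_cons.mp hnd'.2.1).1⟩
      have hU : (τ.take p).toFinset ∪ (τ.drop (p + 1)).toFinset = f.erase b := by
        have hf' : insert b ((τ.take p).toFinset ∪ (τ.drop (p + 1)).toFinset) = f := by
          rw [← hτ]
          conv_rhs => rw [← hτsplit]
          simp [List.toFinset_append, Finset.union_insert]
        rw [← hf', Finset.erase_insert (by
          simp only [Finset.mem_union, List.mem_toFinset]
          push_neg
          exact hbnot)]
      rw [List.toFinset_append, List.toFinset_append]
      have : (τ.drop (p + 1)).toFinset ∪ ((τ.take p).toFinset ∪ [c].toFinset)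
          = insert c ((τ.take p).toFinset ∪ (τ.drop (p + 1)).toFinset) := by
        simp only [List.toFinset_cons, List.toFinset_nil, insert_empty_eq]
        ext x
        simp only [Finset.mem_union, Finset.mem_insert, Finset.mem_singleton]
        tauto
      rw [this, hU, ← hfib, ← hgeq]
    refine ⟨τ.take p ++ [c], ?_, ?_⟩
    · intro i hi
      rw [hwlen] at hi
      rcases Nat.lt_or_ge i (p + 1) with hip | hip
      · exact Or.inl (hfwin i (by omega))
      · have : i = p + 1 := by omega
        subst this
        exact Or.inr hgwin
    · rw [hwlen]
      have : k + p + 1 - k = p + 1 := by omega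
      rw [this]
      exact hgwin

/-- Extend a walk whose last window is `f` to one whose last window is `g`. -/
lemma dtc_extend (k : ℕ) (hk : 1 ≤ k) (D : Finset (Finset A)) (w : List A)
    (hlw : k ≤ w.length) (hw : ∀ i, i + k ≤ w.length → walkEdgeAt k w i ∈ D)
    (f g : Finset A) (hf : f ∈ D) (hg : g ∈ D) (hfc : f.card = k) (hgc : g.card = k)
    (hfg : k - 1 ≤ (f ∩ g).card) (hlast : walkEdgeAt k w (w.length - k) = f) :
    ∃ m : List A, k ≤ (w ++ m).length ∧
      (∀ i, i + k ≤ (w ++ m).length → walkEdgeAt k (w ++ m) i ∈ D) ∧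
      walkEdgeAt k (w ++ m) ((w ++ m).length - k) = g := by
  set q := w.length - k with hq
  set τ := w.drop q with hτdef
  have hτlen : τ.length = k := by simp [hτdef, List.length_drop]; omega
  have hτfin : τ.toFinset = f := by
    have h1 : walkEdgeAt k w q = τ.toFinset := by
      unfold walkEdgeAt
      rw [List.take_of_length_le (by rw [hτlen])]
    rw [← h1, hlast]
  have hτnd : τ.Nodup := nodup_of_toFinset_card (by rw [hτfin, hfc, hτlen])
  obtain ⟨m, hmem, hmlast⟩ := dtc_step k hk f g hfc hgc hfg τ hτnd hτlen hτfin
  have hwq : w = w.take q ++ τ := by rw [hτdef, List.take_append_drop]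
  have hqlen : (w.take q).length = q := by simp [List.length_take]; omega
  have htrans : ∀ i, q ≤ i → (w ++ (τ.take (i - q))).length = i → True := fun _ _ _ => trivial
  have hkey : ∀ i, q ≤ i → walkEdgeAt k (w ++ m) i = walkEdgeAt k (τ ++ m) (i - q) := by
    intro i hi
    unfold walkEdgeAt
    have h1 : w ++ m = w.take q ++ (τ ++ m) := by
      rw [← List.append_assoc, ← hwq]
    rw [h1]
    have h2 : i = (w.take q).length + (i - q) := by omega
    conv_lhs => rw [h2, List.drop_length_add_append]
  have hlen1 : (w ++ m).length = q + (τ ++ m).length := by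
    simp only [List.length_append, hτlen]
    omega
  refine ⟨m, by simp [List.length_append]; omega, ?_, ?_⟩
  · intro i hi
    rcases Nat.lt_or_ge i q with hiq | hiq
    · have : i + k ≤ w.length := by omega
      rw [walkEdgeAt_append k w m i this]
      exact hw i this
    · rw [hkey i hiq]
      have hib : (i - q) + k ≤ (τ ++ m).length := by omega
      rcases hmem (i - q) hib with h | h
      · rw [h]; exact hf
      · rw [h]; exact hg
  · have hge : q ≤ (w ++ m).length - k := by
      have : k ≤ (τ ++ m).length := by simp [List.length_append, hτlen]
      omega
    rw [hkey _ hge]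
    have : (w ++ m).length - k - q = (τ ++ m).length - k := by
      have : k ≤ (τ ++ m).length := by simp [List.length_append, hτlen]
      omega
    rw [this]
    exact hmlast

/-- From a `dtcRel`-chain one obtains a tight walk within the component. -/
lemma dtc_walk_of_chain (k : ℕ) (hk : 1 ≤ k) (E : Finset (Finset A))
    (hcard : ∀ e ∈ E, e.card = k) {e f : Finset A} (he : e ∈ E)
    (h : Relation.ReflTransGen (dtcRel k E) e f) :
    ∃ w : List A, k ≤ w.length ∧ (∀ i, i + k ≤ w.length → walkEdgeAt k w i ∈ dtcComp k E e) ∧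
      walkEdgeAt k w 0 = e ∧ walkEdgeAt k w (w.length - k) = f := by
  induction h with
  | refl =>
    refine ⟨e.toList, ?_, ?_, ?_, ?_⟩
    · rw [Finset.length_toList, hcard e he]
    · intro i hi
      rw [Finset.length_toList, hcard e he] at hi
      have hi0 : i = 0 := by omega
      subst hi0
      have : walkEdgeAt k e.toList 0 = e := by
        unfold walkEdgeAt
        rw [List.drop_zero, List.take_of_length_le (by rw [Finset.length_toList, hcard e he]),
          Finset.toList_toFinset]
      rw [this]
      exact mem_dtcComp.mpr ⟨he, Relation.ReflTransGen.refl⟩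
    · unfold walkEdgeAt
      rw [List.drop_zero, List.take_of_length_le (by rw [Finset.length_toList, hcard e he]),
        Finset.toList_toFinset]
    · rw [Finset.length_toList, hcard e he]
      have : k - k = 0 := by omega
      rw [this]
      unfold walkEdgeAt
      rw [List.drop_zero, List.take_of_length_le (by rw [Finset.length_toList, hcard e he]),
        Finset.toList_toFinset]
  | @tail b c hab hbc ih =>
    obtain ⟨w, hlw, hw, h0, hlastb⟩ := ih
    obtain ⟨hbE, hcE, hbc'⟩ := hbc
    have hbcomp : b ∈ dtcComp k E e := mem_dtcComp.mpr ⟨hbE, hab⟩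
    have hccomp : c ∈ dtcComp k E e := mem_dtcComp.mpr ⟨hcE, hab.tail ⟨hbE, hcE, hbc'⟩⟩
    obtain ⟨m, hlw', hw', hlast'⟩ := dtc_extend k hk (dtcComp k E e) w hlw hw b c hbcomp hccomp
      (hcard b hbE) (hcard c hcE) hbc' hlastb
    exact ⟨w ++ m, hlw', hw',
      by rw [walkEdgeAt_append k w m 0 (by omega)]; exact h0, hlast'⟩

/-- Consecutive windows of a tight walk are `dtcRel`-adjacent. -/
lemma dtc_rel_windows (k : ℕ) (hk : 1 ≤ k) (E : Finset (Finset A))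
    (hcard : ∀ e ∈ E, e.card = k) (w : List A) (hw : IsTightWalk k E w)
    (i : ℕ) (hi : (i + 1) + k ≤ w.length) :
    dtcRel k E (walkEdgeAt k w i) (walkEdgeAt k w (i + 1)) := by
  refine ⟨hw.2 i (by omega), hw.2 (i + 1) hi, ?_⟩
  set u := (w.drop i).take k with hu
  set s := (w.drop (i + 1)).take (k - 1) with hs
  have hulen : u.length = k := by simp [hu, List.length_take, List.length_drop]; omega
  have hund : u.Nodup := by
    apply nodup_of_toFinset_card
    rw [hulen]
    exact hcard _ (hw.2 i (by omega))
  have hsu : s = u.drop 1 := by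
    rw [hu, List.drop_take, List.drop_drop]
  have hsnd : s.Nodup := hsu ▸ hund.sublist (List.drop_sublist 1 u)
  have hslen : s.length = k - 1 := by
    simp [hs, List.length_take, List.length_drop]
    omega
  have hsub : s.toFinset ⊆ walkEdgeAt k w i ∩ walkEdgeAt k w (i + 1) := by
    intro x hx
    rw [List.mem_toFinset] at hx
    rw [Finset.mem_inter]
    constructor
    · unfold walkEdgeAt
      rw [List.mem_toFinset]
      rw [hsu] at hx
      exact List.drop_subset 1 u hx
    · unfold walkEdgeAt
      rw [List.mem_toFinset]
      have : s = ((w.drop (i + 1)).take k).take (k - 1) := by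
        rw [hs, List.take_take]
        congr 1
        omega
      rw [this] at hx
      exact List.take_subset _ _ hx
  calc k - 1 = s.toFinset.card := by rw [List.toFinset_card_of_nodup hsnd, hslen]
    _ ≤ _ := Finset.card_le_card hsub

/-- Any two windows of a tight walk are connected by a `dtcRel`-chain. -/
lemma dtc_chain_of_walk (k : ℕ) (hk : 1 ≤ k) (E : Finset (Finset A))
    (hcard : ∀ e ∈ E, e.card = k) (w : List A) (hw : IsTightWalk k E w)
    {i j : ℕ} (hi : i + k ≤ w.length) (hj : j + k ≤ w.length) :
    Relation.ReflTransGen (dtcRel k E) (walkEdgeAt k w i) (walkEdgeAt k w j) := by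
  have aux : ∀ a d : ℕ, a + d + k ≤ w.length →
      Relation.ReflTransGen (dtcRel k E) (walkEdgeAt k w a) (walkEdgeAt k w (a + d)) := by
    intro a d
    induction d with
    | zero => intro _; exact Relation.ReflTransGen.refl
    | succ d ihd =>
      intro hd
      have h1 : a + d + k ≤ w.length := by omega
      have h2 : (a + d + 1) + k ≤ w.length := by omega
      have := (ihd h1).tail (dtc_rel_windows k hk E hcard w hw (a + d) h2)
      have heq : a + (d + 1) = a + d + 1 := by omega
      rwa [heq]
  rcases le_total i j with hij | hij
  · have := aux i (j - i) (by omega)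
    have heq : i + (j - i) = j := by omega
    rwa [heq] at this
  · have := aux j (i - j) (by omega)
    have heq : j + (i - j) = i := by omega
    rw [heq] at this
    exact (by haveI hsymm : Std.Symm (dtcRel k E) := ⟨fun _ _ h => dtcRel_symm k E h⟩; exact Relation.ReflTransGen.symmetric.symm _ _ this)

/-- Two edges of a tightly connected subgraph of `E` are chain-connected in `E`. -/
lemma dtc_chain_of_connected (k : ℕ) (hk : 1 ≤ k) (E : Finset (Finset A))
    (hcard : ∀ e ∈ E, e.card = k) {D : Finset (Finset A)} (hDE : D ⊆ E)
    (hTC : TightlyConnected k D) {e f : Finset A} (he : e ∈ D) (hf : f ∈ D) :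
    Relation.ReflTransGen (dtcRel k E) e f := by
  obtain ⟨w, hw, hone, honf⟩ := hTC e he f hf
  have hwE : IsTightWalk k E w := ⟨hw.1, fun i hi => hDE (hw.2 i hi)⟩
  obtain ⟨i, hi, hie⟩ := hone
  obtain ⟨j, hj, hjf⟩ := honf
  have := dtc_chain_of_walk k hk E hcard w hwE hi hj
  rwa [hie, hjf] at this

/-- The reachability class is a tight component. -/
lemma dtcComp_isComponent (k : ℕ) (hk : 1 ≤ k) (E : Finset (Finset A))
    (hcard : ∀ e ∈ E, e.card = k) (e0 : Finset A) (he0 : e0 ∈ E) :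
    IsTightComponent k E (dtcComp k E e0) := by
  refine ⟨dtcComp_subset k E e0, ?_, ?_⟩
  · intro e1 he1 e2 he2
    have he1' := mem_dtcComp.mp he1
    have he2' := mem_dtcComp.mp he2
    have hchain : Relation.ReflTransGen (dtcRel k E) e1 e2 :=
      (by haveI hsymm : Std.Symm (dtcRel k E) := ⟨fun _ _ h => dtcRel_symm k E h⟩; exact Relation.ReflTransGen.symmetric.symm _ _ he1'.2 : Relation.ReflTransGen (dtcRel k E) e1 e0).trans he2'.2
    obtain ⟨w, hlw, hwin, h0, hlast⟩ := dtc_walk_of_chain k hk E hcard he1'.1 hchain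
    refine ⟨w, ⟨hlw, fun i hi => ?_⟩, ⟨0, by omega, h0⟩, ⟨w.length - k, by omega, hlast⟩⟩
    rw [← dtcComp_congr he1]
    exact hwin i hi
  · intro C' hsub hsubE hTC
    apply Finset.Subset.antisymm _ hsub
    intro f hf
    have he0C : e0 ∈ dtcComp k E e0 := mem_dtcComp.mpr ⟨he0, Relation.ReflTransGen.refl⟩
    have hchain := dtc_chain_of_connected k hk E hcard hsubE hTC (hsub he0C) hf
    exact mem_dtcComp.mpr ⟨hsubE hf, hchain⟩

lemma dtc_mem_shadow_iff {j : ℕ} {E : Finset (Finset A)} {S : Finset A} :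
    S ∈ _root_.shadow j E ↔ ∃ e ∈ E, S ⊆ e ∧ S.card = j := by
  simp [_root_.shadow, Finset.mem_biUnion, Finset.mem_powersetCard]

lemma dtc_shadow_union (j : ℕ) (E F : Finset (Finset A)) :
    _root_.shadow j (E ∪ F) = _root_.shadow j E ∪ _root_.shadow j F := by
  ext S
  simp only [dtc_mem_shadow_iff, Finset.mem_union]
  constructor
  · rintro ⟨e, (he | he), hSe, hSc⟩
    · exact Or.inl ⟨e, he, hSe, hSc⟩
    · exact Or.inr ⟨e, he, hSe, hSc⟩
  · rintro (⟨e, he, hSe, hSc⟩ | ⟨e, he, hSe, hSc⟩)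
    · exact ⟨e, Or.inl he, hSe, hSc⟩
    · exact ⟨e, Or.inr he, hSe, hSc⟩

/-- Core counting statement: some tight component is at least as dense as the whole. -/
lemma dtc_core (k : ℕ) (hk : 2 ≤ k) (E : Finset (Finset A))
    (hcard : ∀ e ∈ E, e.card = k) (hne : E.Nonempty) :
    ∃ C : Finset (Finset A), IsTightComponent k E C ∧ C.Nonempty ∧
      E.card * (shadow (k - 1) C).card ≤ C.card * (shadow (k - 1) E).card := by
  induction E using Finset.strongInduction with
  | _ E ih =>
  obtain ⟨e0, he0⟩ := hne
  have hk1 : 1 ≤ k := by omega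
  set C1 := dtcComp k E e0 with hC1
  have hcomp1 := dtcComp_isComponent k hk1 E hcard e0 he0
  have he0C : e0 ∈ C1 := mem_dtcComp.mpr ⟨he0, Relation.ReflTransGen.refl⟩
  have hC1E : C1 ⊆ E := dtcComp_subset k E e0
  set E' := E \ C1 with hE'
  have hEunion : E = C1 ∪ E' := (Finset.union_sdiff_of_subset hC1E).symm
  have hdisj : Disjoint (shadow (k - 1) C1) (shadow (k - 1) E') := by
    rw [Finset.disjoint_left]
    intro S hS1 hS2
    obtain ⟨e, heC, hSe, hScard⟩ := dtc_mem_shadow_iff.mp hS1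
    obtain ⟨f, hfE', hSf, _⟩ := dtc_mem_shadow_iff.mp hS2
    have hfE : f ∈ E := (Finset.mem_sdiff.mp hfE').1
    have hrel : dtcRel k E e f := ⟨hC1E heC, hfE, by
      calc k - 1 = S.card := hScard.symm
        _ ≤ (e ∩ f).card := Finset.card_le_card (Finset.subset_inter hSe hSf)⟩
    have hfC1 : f ∈ C1 := mem_dtcComp.mpr ⟨hfE, (mem_dtcComp.mp heC).2.tail hrel⟩
    exact (Finset.mem_sdiff.mp hfE').2 hfC1
  have hshE : (shadow (k - 1) E).card
      = (shadow (k - 1) C1).card + (shadow (k - 1) E').card := by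
    conv_lhs => rw [hEunion]
    rw [dtc_shadow_union, Finset.card_union_of_disjoint hdisj]
  have hcardE : E.card = C1.card + E'.card := by
    rw [hE', Finset.card_sdiff_of_subset hC1E]
    have := Finset.card_le_card hC1E
    omega
  by_cases hE'e : E' = ∅
  · have hCE : C1 = E := Finset.Subset.antisymm hC1E (Finset.sdiff_eq_empty_iff_subset.mp hE'e)
    exact ⟨C1, hcomp1, ⟨e0, he0C⟩, le_of_eq (by rw [hCE])⟩
  · have hne' : E'.Nonempty := Finset.nonempty_iff_ne_empty.mpr hE'e
    have hssub : E' ⊂ E := by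
      rw [Finset.ssubset_iff_of_subset (hE' ▸ Finset.sdiff_subset)]
      exact ⟨e0, he0, fun h => (Finset.mem_sdiff.mp h).2 he0C⟩
    obtain ⟨C2, hcomp2, hC2ne, hineq2⟩ :=
      ih E' hssub (fun e he => hcard e (Finset.mem_sdiff.mp he).1) hne'
    have hC2E' : C2 ⊆ E' := hcomp2.1
    have hC2E : C2 ⊆ E := hC2E'.trans (hE' ▸ Finset.sdiff_subset)
    have hcomp2E : IsTightComponent k E C2 := by
      refine ⟨hC2E, hcomp2.2.1, ?_⟩
      intro C3 hsub3 hsub3E hTC3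
      have hC3E' : C3 ⊆ E' := by
        intro f hf
        rw [hE', Finset.mem_sdiff]
        refine ⟨hsub3E hf, fun hfC1 => ?_⟩
        obtain ⟨e2, he2⟩ := hC2ne
        have hchain := dtc_chain_of_connected k hk1 E hcard hsub3E hTC3 hf (hsub3 he2)
        have he2C1 : e2 ∈ C1 := mem_dtcComp.mpr ⟨hC2E he2, (mem_dtcComp.mp hfC1).2.trans hchain⟩
        exact (Finset.mem_sdiff.mp (hC2E' he2)).2 he2C1
      exact hcomp2.2.2 C3 hsub3 hC3E' hTC3
    have hC2pos : 0 < C2.card := Finset.card_pos.mpr hC2ne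
    have hshC2pos : 0 < (shadow (k - 1) C2).card := by
      obtain ⟨e2, he2⟩ := hC2ne
      have hle : k - 1 ≤ e2.card := by rw [hcard e2 (hC2E he2)]; omega
      obtain ⟨S, hS, hScard⟩ := Finset.exists_subset_card_eq hle
      exact Finset.card_pos.mpr ⟨S, dtc_mem_shadow_iff.mpr ⟨e2, he2, hS, hScard⟩⟩
    by_cases hcase : C2.card * (shadow (k - 1) C1).card ≤ C1.card * (shadow (k - 1) C2).card
    · refine ⟨C1, hcomp1, ⟨e0, he0C⟩, ?_⟩
      rw [hcardE, hshE]
      have key : E'.card * (shadow (k - 1) C1).card ≤ C1.card * (shadow (k - 1) E').card := by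
        have h2 : (E'.card * (shadow (k - 1) C2).card) * (C2.card * (shadow (k - 1) C1).card)
            ≤ (C2.card * (shadow (k - 1) E').card) * (C1.card * (shadow (k - 1) C2).card) :=
          Nat.mul_le_mul hineq2 hcase
        have hpos : 0 < C2.card * (shadow (k - 1) C2).card := Nat.mul_pos hC2pos hshC2pos
        apply Nat.le_of_mul_le_mul_right _ hpos
        calc E'.card * (shadow (k - 1) C1).card * (C2.card * (shadow (k - 1) C2).card)
            = (E'.card * (shadow (k - 1) C2).card) * (C2.card * (shadow (k - 1) C1).card) := by
              ring
          _ ≤ (C2.card * (shadow (k - 1) E').card) * (C1.card * (shadow (k - 1) C2).card) := h2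
          _ = C1.card * (shadow (k - 1) E').card * (C2.card * (shadow (k - 1) C2).card) := by
              ring
      calc (C1.card + E'.card) * (shadow (k - 1) C1).card
          = C1.card * (shadow (k - 1) C1).card + E'.card * (shadow (k - 1) C1).card := by ring
        _ ≤ C1.card * (shadow (k - 1) C1).card + C1.card * (shadow (k - 1) E').card :=
            Nat.add_le_add_left key _
        _ = C1.card * ((shadow (k - 1) C1).card + (shadow (k - 1) E').card) := by ring
    · push_neg at hcase
      refine ⟨C2, hcomp2E, hC2ne, ?_⟩
      rw [hcardE, hshE]
      calc (C1.card + E'.card) * (shadow (k - 1) C2).card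
          = C1.card * (shadow (k - 1) C2).card + E'.card * (shadow (k - 1) C2).card := by ring
        _ ≤ C2.card * (shadow (k - 1) C1).card + C2.card * (shadow (k - 1) E').card :=
            Nat.add_le_add hcase.le hineq2
        _ = C2.card * ((shadow (k - 1) C1).card + (shadow (k - 1) E').card) := by ring

end DTC

/-- dense tight component. -/
theorem dense_tight_component {B : Type*} [DecidableEq B] (l : ℕ) (hl : 2 ≤ l)
    (V : Finset B) (E : Finset (Finset B)) (hE : ∀ e ∈ E, e ⊆ V ∧ e.card = l)
    (hne : E.Nonempty) :
    ∃ C : Finset (Finset B), IsTightComponent l E C ∧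
      E.card * (shadow (l - 1) C).card ≤ C.card * (shadow (l - 1) E).card ∧
      ((E.card : ℝ) / (V.card.choose l : ℝ)) * (((shadow (l - 1) C).card : ℝ) / (V.card.choose (l - 1) : ℝ))
        ≤ (C.card : ℝ) / (V.card.choose l : ℝ) := by
  obtain ⟨C, hcomp, hCne, hineq⟩ := dtc_core l hl E (fun e he => (hE e he).2) hne
  obtain ⟨e, he⟩ := hne
  have hlV : l ≤ V.card := by
    rw [← (hE e he).2]
    exact Finset.card_le_card (hE e he).1
  have hshEle : (shadow (l - 1) E).card ≤ V.card.choose (l - 1) := by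
    rw [← Finset.card_powersetCard (l - 1) V]
    apply Finset.card_le_card
    intro S hS
    obtain ⟨f, hf, hSf, hScard⟩ := dtc_mem_shadow_iff.mp hS
    exact Finset.mem_powersetCard.mpr ⟨hSf.trans (hE f hf).1, hScard⟩
  refine ⟨C, hcomp, hineq, ?_⟩
  have hkey : E.card * (shadow (l - 1) C).card ≤ C.card * (V.card.choose (l - 1)) :=
    hineq.trans (Nat.mul_le_mul_left _ hshEle)
  have hp : (0 : ℝ) < (V.card.choose l : ℝ) := by exact_mod_cast Nat.choose_pos hlV
  have hq : (0 : ℝ) < (V.card.choose (l - 1) : ℝ) := by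
    exact_mod_cast Nat.choose_pos (by omega)
  have hkeyR : (E.card : ℝ) * ((shadow (l - 1) C).card : ℝ)
      ≤ (C.card : ℝ) * ((V.card.choose (l - 1) : ℕ) : ℝ) := by exact_mod_cast hkey
  rw [div_mul_div_comm, div_le_div_iff₀ (by positivity) hp]
  calc (E.card : ℝ) * ((shadow (l - 1) C).card : ℝ) * ((V.card.choose l : ℕ) : ℝ)
      ≤ ((C.card : ℝ) * ((V.card.choose (l - 1) : ℕ) : ℝ)) * ((V.card.choose l : ℕ) : ℝ) :=
        mul_le_mul_of_nonneg_right hkeyR hp.le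
    _ = (C.card : ℝ) * (((V.card.choose l : ℕ) : ℝ) * ((V.card.choose (l - 1) : ℕ) : ℝ)) := by
        ring
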